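/- The semidirect product ℤ³ ⋊ S₃ (with S₃ permuting coordinates) has the presentation with two generators a, b and relations b² = e, (baba⁻¹)³ = e, and ba³ba⁻³ = e, where the isomorphism sends a to ((0, 0, 1), c) with c the 3-cycle c(k) = k − 1 mod 3, and b to (0, (1 2)). -/

import Mathlib

/-- The automorphism of `ℤ^α` (written multiplicatively) given by permuting
coordinates by `s`. -/
def permMulAut {α : Type*} (s : Equiv.Perm α) : MulAut (Multiplicative (α → ℤ)) where
  toFun z := Multiplicative.ofAdd (Multiplicative.toAdd z ∘ ⇑s.symm)
  invFun z := Multiplicative.ofAdd (Multiplicative.toAdd z ∘ ⇑s)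
  left_inv z := by simp [Function.comp_def]
  right_inv z := by simp [Function.comp_def]
  map_mul' z₁ z₂ := rfl

/-- The action of the symmetric group on `ℤ^α` by permuting coordinates,
as a homomorphism to the automorphism group. -/
def permHom (α : Type*) : Equiv.Perm α →* MulAut (Multiplicative (α → ℤ)) where
  toFun := permMulAut
  map_one' := by ext z; rfl
  map_mul' s t := by ext z; rfl

/-- Relators on the two generators `a` (encoded `true`) and `b` (encoded
`false`): `b² = e`, `(baba⁻¹)³ = e`, and `ba³ba⁻³ = e`. -/
def sdpRelsThree : Set (FreeGroup Bool) :=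
  letI a : FreeGroup Bool := FreeGroup.of true
  letI b : FreeGroup Bool := FreeGroup.of false
  {b ^ 2, (b * a * b * a⁻¹) ^ 3, b * a ^ 3 * b * (a ^ 3)⁻¹}

namespace Stmt11Aux

variable {Q : Type*} [Group Q]

/-- Data: two elements of a group satisfying the three relations. -/
structure SDP (Q : Type*) [Group Q] where
  a : Q
  b : Q
  hb : b * b = 1
  ht3 : (b * a * b * a⁻¹) ^ 3 = 1
  ha3 : b * (a * a * a) * b = a * a * a

namespace SDP

variable (d : SDP Q)

def t : Q := d.b * d.a * d.b * d.a⁻¹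

lemma hbinv : d.b⁻¹ = d.b := inv_eq_of_mul_eq_one_left d.hb

lemma httt : d.t * d.t * d.t = 1 := by
  have h := d.ht3
  rw [pow_succ, pow_succ, pow_one] at h
  exact h

lemma htinv : d.t⁻¹ = d.t * d.t :=
  inv_eq_of_mul_eq_one_right (by rw [← mul_assoc]; exact d.httt)

lemma htt : d.t⁻¹ * d.t⁻¹ = d.t := by
  rw [d.htinv]
  calc d.t * d.t * (d.t * d.t) = (d.t * d.t * d.t) * d.t := by group
  _ = d.t := by rw [d.httt]; group

lemma hbab : d.b * d.a * d.b⁻¹ = d.t * d.a := by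
  rw [d.hbinv]; unfold t; group

lemma hbtb : d.b * d.t * d.b⁻¹ = d.t⁻¹ := by
  rw [d.hbinv]
  show d.b * d.t * d.b = d.t⁻¹
  have e1 : d.b * d.t * d.b = (d.b * d.b) * (d.a * d.b * d.a⁻¹ * d.b) := by unfold t; group
  have e2 : d.t⁻¹ = d.a * d.b⁻¹ * d.a⁻¹ * d.b⁻¹ := by unfold t; group
  rw [e1, d.hb, e2, d.hbinv]; group

lemma hstar : d.t * d.a * (d.t * d.a) * (d.t * d.a) = d.a * d.a * d.a := by
  rw [← d.hbab]
  calc d.b * d.a * d.b⁻¹ * (d.b * d.a * d.b⁻¹) * (d.b * d.a * d.b⁻¹)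
      = d.b * (d.a * d.a * d.a) * d.b⁻¹ := by group
  _ = d.a * d.a * d.a := by rw [d.hbinv, d.ha3]

lemma hstar' : d.t * d.a * d.t * d.a = d.a * d.a * d.t⁻¹ := by
  calc d.t * d.a * d.t * d.a
      = d.t * d.a * (d.t * d.a) * (d.t * d.a) * (d.a⁻¹ * d.t⁻¹) := by group
  _ = d.a * d.a * d.a * (d.a⁻¹ * d.t⁻¹) := by rw [d.hstar]
  _ = d.a * d.a * d.t⁻¹ := by group

lemma hata : d.a * d.t * d.a = d.t⁻¹ * (d.a * d.a) * d.t⁻¹ := by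
  calc d.a * d.t * d.a = d.t⁻¹ * (d.t * d.a * d.t * d.a) := by group
  _ = d.t⁻¹ * (d.a * d.a * d.t⁻¹) := by rw [d.hstar']
  _ = d.t⁻¹ * (d.a * d.a) * d.t⁻¹ := by group

lemma hatat : d.a * d.t * d.a * d.t = d.t⁻¹ * (d.a * d.a) := by
  calc d.a * d.t * d.a * d.t = d.t⁻¹ * (d.t * d.a * d.t * d.a) * d.t := by group
  _ = d.t⁻¹ * (d.a * d.a * d.t⁻¹) * d.t := by rw [d.hstar']
  _ = d.t⁻¹ * (d.a * d.a) := by group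

def x0 : Q := d.t * d.a * d.t
def x1 : Q := d.a * d.t⁻¹
def x2 : Q := d.t⁻¹ * d.a
def rr : Q := d.a⁻¹ * d.t * d.a

lemma hr3 : d.rr * d.rr * d.rr = 1 := by
  unfold rr
  calc d.a⁻¹ * d.t * d.a * (d.a⁻¹ * d.t * d.a) * (d.a⁻¹ * d.t * d.a)
      = d.a⁻¹ * (d.t * d.t * d.t) * d.a := by group
  _ = 1 := by rw [d.httt]; group

lemma hrinv : d.rr⁻¹ = d.rr * d.rr :=
  inv_eq_of_mul_eq_one_right (by rw [← mul_assoc]; exact d.hr3)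

lemma hx0x1 : d.x0 * d.x1 = d.a * d.a * d.t := by
  unfold x0 x1
  calc d.t * d.a * d.t * (d.a * d.t⁻¹) = (d.t * d.a * d.t * d.a) * d.t⁻¹ := by group
  _ = d.a * d.a * d.t⁻¹ * d.t⁻¹ := by rw [d.hstar']
  _ = d.a * d.a * (d.t⁻¹ * d.t⁻¹) := by group
  _ = d.a * d.a * d.t := by rw [d.htt]

lemma hc01 : d.x0 * d.x1 = d.x1 * d.x0 := by
  rw [d.hx0x1]; unfold x0 x1; group

lemma hx0x2 : d.x0 * d.x2 = d.t * (d.a * d.a) := by unfold x0 x2; group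

lemma hx2x0 : d.x2 * d.x0 = d.t * (d.a * d.a) := by
  unfold x0 x2
  calc d.t⁻¹ * d.a * (d.t * d.a * d.t) = d.t⁻¹ * (d.a * d.t * d.a * d.t) := by group
  _ = d.t⁻¹ * (d.t⁻¹ * (d.a * d.a)) := by rw [d.hatat]
  _ = (d.t⁻¹ * d.t⁻¹) * (d.a * d.a) := by group
  _ = d.t * (d.a * d.a) := by rw [d.htt]

lemma hc02 : d.x0 * d.x2 = d.x2 * d.x0 := by rw [d.hx0x2, d.hx2x0]

lemma hx1x2 : d.x1 * d.x2 = d.a * d.t * d.a := by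
  unfold x1 x2
  calc d.a * d.t⁻¹ * (d.t⁻¹ * d.a) = d.a * (d.t⁻¹ * d.t⁻¹) * d.a := by group
  _ = d.a * d.t * d.a := by rw [d.htt]

lemma hc12 : d.x1 * d.x2 = d.x2 * d.x1 := by
  rw [d.hx1x2, d.hata]; unfold x1 x2; group

lemma hr0 : d.rr * d.x0 * d.rr⁻¹ = d.x2 := by
  unfold rr x0 x2
  calc d.a⁻¹ * d.t * d.a * (d.t * d.a * d.t) * (d.a⁻¹ * d.t * d.a)⁻¹
      = d.a⁻¹ * d.t * (d.a * d.t * d.a) * d.t * d.a⁻¹ * d.t⁻¹ * d.a := by group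
  _ = d.a⁻¹ * d.t * (d.t⁻¹ * (d.a * d.a) * d.t⁻¹) * d.t * d.a⁻¹ * d.t⁻¹ * d.a := by rw [d.hata]
  _ = d.t⁻¹ * d.a := by group

lemma hr2 : d.rr * d.x2 * d.rr⁻¹ = d.x1 := by
  unfold rr x1 x2
  calc d.a⁻¹ * d.t * d.a * (d.t⁻¹ * d.a) * (d.a⁻¹ * d.t * d.a)⁻¹
      = d.a⁻¹ * (d.t * d.a * (d.t⁻¹ * d.t⁻¹)) * d.a := by group
  _ = d.a⁻¹ * (d.t * d.a * d.t) * d.a := by rw [d.htt]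
  _ = d.a⁻¹ * (d.t * d.a * d.t * d.a) := by group
  _ = d.a⁻¹ * (d.a * d.a * d.t⁻¹) := by rw [d.hstar']
  _ = d.a * d.t⁻¹ := by group

lemma hr1 : d.rr * d.x1 * d.rr⁻¹ = d.x0 := by
  rw [← d.hr2, ← d.hr0]
  calc d.rr * (d.rr * (d.rr * d.x0 * d.rr⁻¹) * d.rr⁻¹) * d.rr⁻¹
      = (d.rr * d.rr * d.rr) * d.x0 * (d.rr * d.rr * d.rr)⁻¹ := by group
  _ = d.x0 := by rw [d.hr3]; group

lemma hs0 : d.b * d.x0 * d.b⁻¹ = d.x1 := by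
  unfold x0 x1
  calc d.b * (d.t * d.a * d.t) * d.b⁻¹
      = (d.b * d.t * d.b⁻¹) * (d.b * d.a * d.b⁻¹) * (d.b * d.t * d.b⁻¹) := by group
  _ = d.t⁻¹ * (d.t * d.a) * d.t⁻¹ := by rw [d.hbtb, d.hbab]
  _ = d.a * d.t⁻¹ := by group

lemma hs1 : d.b * d.x1 * d.b⁻¹ = d.x0 := by
  rw [← d.hs0]
  calc d.b * (d.b * d.x0 * d.b⁻¹) * d.b⁻¹ = (d.b * d.b) * d.x0 * (d.b * d.b)⁻¹ := by group
  _ = d.x0 := by rw [d.hb]; group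

lemma hs2 : d.b * d.x2 * d.b⁻¹ = d.x2 := by
  unfold x2
  calc d.b * (d.t⁻¹ * d.a) * d.b⁻¹
      = (d.b * d.t * d.b⁻¹)⁻¹ * (d.b * d.a * d.b⁻¹) := by group
  _ = (d.t⁻¹)⁻¹ * (d.t * d.a) := by rw [d.hbtb, d.hbab]
  _ = d.t * (d.t * d.a) := by group
  _ = d.t⁻¹ * d.a := by rw [d.htinv]; group

lemma hbr : d.b * d.rr * d.b⁻¹ = d.rr⁻¹ := by
  unfold rr
  calc d.b * (d.a⁻¹ * d.t * d.a) * d.b⁻¹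
      = (d.b * d.a * d.b⁻¹)⁻¹ * (d.b * d.t * d.b⁻¹) * (d.b * d.a * d.b⁻¹) := by group
  _ = (d.t * d.a)⁻¹ * d.t⁻¹ * (d.t * d.a) := by rw [d.hbtb, d.hbab]
  _ = (d.a⁻¹ * d.t * d.a)⁻¹ := by group

lemma hx2r : d.x2 * d.rr = d.a := by unfold x2 rr; group


lemma com01 : Commute d.x0 d.x1 := d.hc01
lemma com02 : Commute d.x0 d.x2 := d.hc02
lemma com12 : Commute d.x1 d.x2 := d.hc12

lemma h10 (m n : ℤ) : d.x1 ^ m * d.x0 ^ n = d.x0 ^ n * d.x1 ^ m :=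
  ((d.com01.zpow_zpow n m).symm).eq
lemma h20 (m n : ℤ) : d.x2 ^ m * d.x0 ^ n = d.x0 ^ n * d.x2 ^ m :=
  ((d.com02.zpow_zpow n m).symm).eq
lemma h21 (m n : ℤ) : d.x2 ^ m * d.x1 ^ n = d.x1 ^ n * d.x2 ^ m :=
  ((d.com12.zpow_zpow n m).symm).eq
lemma h10' (m n : ℤ) (y : Q) : d.x1 ^ m * (d.x0 ^ n * y) = d.x0 ^ n * (d.x1 ^ m * y) := by
  rw [← mul_assoc, d.h10, mul_assoc]
lemma h20' (m n : ℤ) (y : Q) : d.x2 ^ m * (d.x0 ^ n * y) = d.x0 ^ n * (d.x2 ^ m * y) := by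
  rw [← mul_assoc, d.h20, mul_assoc]
lemma h21' (m n : ℤ) (y : Q) : d.x2 ^ m * (d.x1 ^ n * y) = d.x1 ^ n * (d.x2 ^ m * y) := by
  rw [← mul_assoc, d.h21, mul_assoc]

/-- The homomorphism `ℤ³ →* Q`. -/
def fmap : Multiplicative (Fin 3 → ℤ) →* Q where
  toFun v := d.x0 ^ (Multiplicative.toAdd v 0) * d.x1 ^ (Multiplicative.toAdd v 1) *
    d.x2 ^ (Multiplicative.toAdd v 2)
  map_one' := by simp
  map_mul' v w := by
    simp only [toAdd_mul, Pi.add_apply, zpow_add]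
    simp only [mul_assoc]
    simp only [d.h10, d.h10', d.h20, d.h20', d.h21, d.h21']

lemma fmap_apply (v : Multiplicative (Fin 3 → ℤ)) :
    d.fmap v = d.x0 ^ (Multiplicative.toAdd v 0) * d.x1 ^ (Multiplicative.toAdd v 1) *
      d.x2 ^ (Multiplicative.toAdd v 2) := rfl

end SDP

def cP : Equiv.Perm (Fin 3) := (finRotate 3).symm
def sP : Equiv.Perm (Fin 3) := Equiv.swap 0 1

lemma sixPerm : ∀ p : Equiv.Perm (Fin 3),
    p = 1 ∨ p = cP ∨ p = cP * cP ∨ p = sP ∨ p = cP * sP ∨ p = cP * cP * sP := by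
  decide

namespace SDP
variable (d : SDP Q)

def gfun (p : Equiv.Perm (Fin 3)) : Q :=
  if p = 1 then 1 else if p = cP then d.rr else if p = cP * cP then d.rr * d.rr
  else if p = sP then d.b else if p = cP * sP then d.rr * d.b else d.rr * (d.rr * d.b)

lemma gfun_one : d.gfun 1 = 1 := by unfold gfun; rw [if_pos rfl]
lemma gfun_c : d.gfun cP = d.rr := by
  unfold gfun; rw [if_neg (by decide), if_pos rfl]
lemma gfun_cc : d.gfun (cP * cP) = d.rr * d.rr := by
  unfold gfun; rw [if_neg (by decide), if_neg (by decide), if_pos rfl]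
lemma gfun_s : d.gfun sP = d.b := by
  unfold gfun; rw [if_neg (by decide), if_neg (by decide), if_neg (by decide), if_pos rfl]
lemma gfun_cs : d.gfun (cP * sP) = d.rr * d.b := by
  unfold gfun
  rw [if_neg (by decide), if_neg (by decide), if_neg (by decide), if_neg (by decide), if_pos rfl]
lemma gfun_ccs : d.gfun (cP * cP * sP) = d.rr * (d.rr * d.b) := by
  unfold gfun
  rw [if_neg (by decide), if_neg (by decide), if_neg (by decide), if_neg (by decide),
    if_neg (by decide)]

lemma e1 (x : Q) : d.b * (d.b * x) = x := by rw [← mul_assoc, d.hb, one_mul]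
lemma e2' : d.rr * (d.rr * d.rr) = 1 := by rw [← mul_assoc]; exact d.hr3
lemma e2 (x : Q) : d.rr * (d.rr * (d.rr * x)) = x := by
  rw [← mul_assoc, ← mul_assoc, d.hr3, one_mul]
lemma e3 : d.b * d.rr = d.rr * (d.rr * d.b) := by
  calc d.b * d.rr = (d.b * d.rr * d.b⁻¹) * d.b := by group
  _ = d.rr⁻¹ * d.b := by rw [d.hbr]
  _ = d.rr * (d.rr * d.b) := by rw [d.hrinv]; group
lemma e3' (x : Q) : d.b * (d.rr * x) = d.rr * (d.rr * (d.b * x)) := by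
  rw [← mul_assoc, d.e3, mul_assoc, mul_assoc]

lemma gfun_mul (p q : Equiv.Perm (Fin 3)) : d.gfun (p * q) = d.gfun p * d.gfun q := by
  rcases sixPerm p with hp|hp|hp|hp|hp|hp <;> subst hp <;>
    rcases sixPerm q with hq|hq|hq|hq|hq|hq <;> subst hq <;>
    simp (config := { decide := true }) only [gfun, if_true, if_false, mul_assoc,
      d.e1, d.e2, d.e2', d.e3, d.e3', d.hb, one_mul, mul_one]

def gmap : Equiv.Perm (Fin 3) →* Q where
  toFun := d.gfun
  map_one' := d.gfun_one
  map_mul' := d.gfun_mul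

lemma gmap_apply (p : Equiv.Perm (Fin 3)) : d.gmap p = d.gfun p := rfl


lemma fmap_perm (p : Equiv.Perm (Fin 3)) (v : Multiplicative (Fin 3 → ℤ)) :
    d.fmap ((permHom (Fin 3)) p v) =
      d.x0 ^ (Multiplicative.toAdd v (p.symm 0)) * d.x1 ^ (Multiplicative.toAdd v (p.symm 1)) *
        d.x2 ^ (Multiplicative.toAdd v (p.symm 2)) := rfl

lemma conj_fmap (g : Q) (v : Multiplicative (Fin 3 → ℤ)) :
    g * d.fmap v * g⁻¹ =
      (g * d.x0 * g⁻¹) ^ (Multiplicative.toAdd v 0) * (g * d.x1 * g⁻¹) ^ (Multiplicative.toAdd v 1) *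
        (g * d.x2 * g⁻¹) ^ (Multiplicative.toAdd v 2) := by
  rw [fmap_apply, conj_zpow, conj_zpow, conj_zpow]
  group

lemma cond_c (v : Multiplicative (Fin 3 → ℤ)) :
    d.fmap ((permHom (Fin 3)) cP v) = d.rr * d.fmap v * d.rr⁻¹ := by
  rw [fmap_perm, d.conj_fmap, d.hr0, d.hr1, d.hr2]
  rw [show (cP.symm 0 : Fin 3) = 1 by decide, show (cP.symm 1 : Fin 3) = 2 by decide,
    show (cP.symm 2 : Fin 3) = 0 by decide]
  rw [d.h20]
  simp only [mul_assoc, d.h21', d.h21]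

lemma cond_s (v : Multiplicative (Fin 3 → ℤ)) :
    d.fmap ((permHom (Fin 3)) sP v) = d.b * d.fmap v * d.b⁻¹ := by
  rw [fmap_perm, d.conj_fmap, d.hs0, d.hs1, d.hs2]
  rw [show (sP.symm 0 : Fin 3) = 1 by decide, show (sP.symm 1 : Fin 3) = 0 by decide,
    show (sP.symm 2 : Fin 3) = 2 by decide]
  rw [d.h10]

lemma cond_one (v : Multiplicative (Fin 3 → ℤ)) :
    d.fmap ((permHom (Fin 3)) 1 v) = (1 : Q) * d.fmap v * (1 : Q)⁻¹ := by
  rw [fmap_perm, fmap_apply]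
  simp
  rfl

lemma cond_mul (p q : Equiv.Perm (Fin 3))
    (hp : ∀ v, d.fmap ((permHom (Fin 3)) p v) = d.gfun p * d.fmap v * (d.gfun p)⁻¹)
    (hq : ∀ v, d.fmap ((permHom (Fin 3)) q v) = d.gfun q * d.fmap v * (d.gfun q)⁻¹)
    (v : Multiplicative (Fin 3 → ℤ)) :
    d.fmap ((permHom (Fin 3)) (p * q) v) = d.gfun (p * q) * d.fmap v * (d.gfun (p * q))⁻¹ := by
  have h1 : (permHom (Fin 3)) (p * q) v = (permHom (Fin 3)) p ((permHom (Fin 3)) q v) := by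
    rw [map_mul]; rfl
  rw [h1, hp, hq, d.gfun_mul]
  group

lemma cond_all (p : Equiv.Perm (Fin 3)) (v : Multiplicative (Fin 3 → ℤ)) :
    d.fmap ((permHom (Fin 3)) p v) = d.gfun p * d.fmap v * (d.gfun p)⁻¹ := by
  have hc : ∀ v, d.fmap ((permHom (Fin 3)) cP v) = d.gfun cP * d.fmap v * (d.gfun cP)⁻¹ := by
    intro v; rw [d.gfun_c]; exact d.cond_c v
  have hs : ∀ v, d.fmap ((permHom (Fin 3)) sP v) = d.gfun sP * d.fmap v * (d.gfun sP)⁻¹ := by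
    intro v; rw [d.gfun_s]; exact d.cond_s v
  have h1 : ∀ v, d.fmap ((permHom (Fin 3)) 1 v) = d.gfun 1 * d.fmap v * (d.gfun 1)⁻¹ := by
    intro v; rw [d.gfun_one]; exact d.cond_one v
  rcases sixPerm p with hp|hp|hp|hp|hp|hp <;> subst hp
  · exact h1 v
  · exact hc v
  · exact d.cond_mul cP cP hc hc v
  · exact hs v
  · exact d.cond_mul cP sP hc hs v
  · exact d.cond_mul (cP * cP) sP (fun v => d.cond_mul cP cP hc hc v) hs v

lemma compat : ∀ p : Equiv.Perm (Fin 3),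
    d.fmap.comp ((permHom (Fin 3)) p).toMonoidHom =
      (MulAut.conj (d.gmap p)).toMonoidHom.comp d.fmap := by
  intro p
  refine MonoidHom.ext fun v => ?_
  simp only [MonoidHom.comp_apply, MulEquiv.coe_toMonoidHom, MulAut.conj_apply]
  exact d.cond_all p v

/-- The inverse homomorphism. -/
def psi : (Multiplicative (Fin 3 → ℤ) ⋊[permHom (Fin 3)] Equiv.Perm (Fin 3)) →* Q :=
  SemidirectProduct.lift d.fmap d.gmap d.compat

lemma psi_mk (n : Multiplicative (Fin 3 → ℤ)) (p : Equiv.Perm (Fin 3)) :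
    d.psi ⟨n, p⟩ = d.fmap n * d.gfun p := rfl

lemma fmap_single2 : d.fmap (Multiplicative.ofAdd (Pi.single (2 : Fin 3) (1 : ℤ))) = d.x2 := by
  rw [fmap_apply]
  simp [Pi.single_apply, show ((0:Fin 3) = 2) = False from by simp [Fin.ext_iff],
    show ((1:Fin 3) = 2) = False from by simp [Fin.ext_iff]]

lemma psi_A : d.psi ⟨Multiplicative.ofAdd (Pi.single (2 : Fin 3) (1 : ℤ)), cP⟩ = d.a := by
  rw [d.psi_mk, d.fmap_single2, d.gfun_c, d.hx2r]

lemma psi_B : d.psi ⟨1, sP⟩ = d.b := by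
  rw [d.psi_mk, map_one, one_mul, d.gfun_s]

end SDP

/-! ### The target group side -/

abbrev G3 := Multiplicative (Fin 3 → ℤ) ⋊[permHom (Fin 3)] Equiv.Perm (Fin 3)

def Ag : G3 := ⟨Multiplicative.ofAdd (Pi.single (2 : Fin 3) (1 : ℤ)), cP⟩
def Bg : G3 := ⟨1, sP⟩

lemma relA1 : Bg * Bg = 1 := by
  refine SemidirectProduct.ext ?_ ?_ <;> decide

lemma relA2 : (Bg * Ag * Bg * Ag⁻¹) ^ 3 = 1 := by
  refine SemidirectProduct.ext ?_ ?_ <;> decide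

lemma relA3 : Bg * Ag ^ 3 * Bg * (Ag ^ 3)⁻¹ = 1 := by
  refine SemidirectProduct.ext ?_ ?_ <;> decide

/-! ### The presented group side -/

abbrev PG := PresentedGroup sdpRelsThree

def pa : PG := PresentedGroup.of true
def pb : PG := PresentedGroup.of false

lemma mk_rel_one : ∀ r ∈ sdpRelsThree, (PresentedGroup.mk sdpRelsThree) r = 1 := fun r hr =>
  (QuotientGroup.eq_one_iff r).2 (Subgroup.subset_normalClosure hr)

lemma relP1 : pb * pb = 1 := by
  have h := mk_rel_one _ (show (FreeGroup.of false) ^ 2 ∈ sdpRelsThree from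
    Set.mem_insert _ _)
  rw [map_pow, pow_two] at h
  exact h

lemma relP2 : (pb * pa * pb * pa⁻¹) ^ 3 = 1 := by
  have h := mk_rel_one _ (show (FreeGroup.of false * FreeGroup.of true * FreeGroup.of false *
      (FreeGroup.of true)⁻¹) ^ 3 ∈ sdpRelsThree from
    Set.mem_insert_of_mem _ (Set.mem_insert _ _))
  simp only [map_pow, map_mul, map_inv] at h
  exact h

lemma relP3 : pb * (pa * pa * pa) * pb = pa * pa * pa := by
  have h := mk_rel_one _ (show (FreeGroup.of false * (FreeGroup.of true) ^ 3 * FreeGroup.of false *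
      ((FreeGroup.of true) ^ 3)⁻¹) ∈ sdpRelsThree from
    Set.mem_insert_of_mem _ (Set.mem_insert_of_mem _ rfl))
  simp only [map_mul, map_inv, map_pow] at h
  have h2 : pb * pa ^ 3 * pb = pa ^ 3 := mul_inv_eq_one.mp h
  rw [show (pa : PG) ^ 3 = pa * pa * pa from by rw [pow_succ, pow_two]] at h2
  exact h2

def dP : SDP PG := ⟨pa, pb, relP1, relP2, relP3⟩

/-! ### The forward homomorphism -/

def fG : Bool → G3 := fun x => cond x Ag Bg

set_option maxRecDepth 4000 in
lemma liftrels : ∀ r ∈ sdpRelsThree, FreeGroup.lift fG r = 1 := by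
  intro r hr
  simp only [sdpRelsThree, Set.mem_insert_iff, Set.mem_singleton_iff] at hr
  rcases hr with rfl | rfl | rfl
  · simp only [map_pow, FreeGroup.lift_apply_of, fG, Bool.cond_true, Bool.cond_false]
    rw [pow_two]; exact relA1
  · simp only [map_pow, map_mul, map_inv, FreeGroup.lift_apply_of, fG, Bool.cond_true, Bool.cond_false]
    exact relA2
  · simp only [map_pow, map_mul, map_inv, FreeGroup.lift_apply_of, fG, Bool.cond_true, Bool.cond_false]
    exact relA3

def phi : PG →* G3 := PresentedGroup.toGroup liftrels

lemma phi_a : phi pa = Ag := PresentedGroup.toGroup.of liftrels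
lemma phi_b : phi pb = Bg := PresentedGroup.toGroup.of liftrels

/-! ### Injectivity -/

lemma psi_phi : ∀ x : PG, dP.psi (phi x) = x := by
  have hhom : dP.psi.comp phi = MonoidHom.id PG := by
    apply PresentedGroup.ext
    intro x
    cases x
    · show dP.psi (phi pb) = pb
      rw [phi_b]
      exact dP.psi_B
    · show dP.psi (phi pa) = pa
      rw [phi_a]
      exact dP.psi_A
  intro x
  exact DFunLike.congr_fun hhom x

lemma phi_inj : Function.Injective phi := fun x y h => by
  rw [← psi_phi x, h, psi_phi y]

/-! ### Surjectivity -/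

def TG : G3 := Bg * Ag * Bg * Ag⁻¹

set_option maxRecDepth 4000 in
lemma idX0 : TG * Ag * TG = SemidirectProduct.inl (Multiplicative.ofAdd (Pi.single (0 : Fin 3) (1 : ℤ))) := by
  refine SemidirectProduct.ext ?_ ?_ <;> decide

set_option maxRecDepth 4000 in
lemma idX1 : Ag * TG⁻¹ = SemidirectProduct.inl (Multiplicative.ofAdd (Pi.single (1 : Fin 3) (1 : ℤ))) := by
  refine SemidirectProduct.ext ?_ ?_ <;> decide

set_option maxRecDepth 4000 in
lemma idX2 : TG⁻¹ * Ag = SemidirectProduct.inl (Multiplicative.ofAdd (Pi.single (2 : Fin 3) (1 : ℤ))) := by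
  refine SemidirectProduct.ext ?_ ?_ <;> decide

set_option maxRecDepth 4000 in
lemma idR : Ag⁻¹ * TG * Ag = SemidirectProduct.inr cP := by
  refine SemidirectProduct.ext ?_ ?_ <;> decide

lemma idB : Bg = SemidirectProduct.inr sP := rfl

lemma smul_single (i : Fin 3) (n : ℤ) : n • (Pi.single i (1 : ℤ) : Fin 3 → ℤ) = Pi.single i n := by
  funext j
  simp [Pi.single_apply]

lemma hA_mem : Ag ∈ phi.range := ⟨pa, phi_a⟩
lemma hB_mem : Bg ∈ phi.range := ⟨pb, phi_b⟩

lemma hT_mem : TG ∈ phi.range :=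
  mul_mem (mul_mem (mul_mem hB_mem hA_mem) hB_mem) (inv_mem hA_mem)

lemma single_mem (i : Fin 3) (hi : SemidirectProduct.inl (Multiplicative.ofAdd (Pi.single i (1 : ℤ))) ∈ phi.range)
    (n : ℤ) : SemidirectProduct.inl (φ := permHom (Fin 3)) (Multiplicative.ofAdd (Pi.single i n)) ∈ phi.range := by
  have h : SemidirectProduct.inl (φ := permHom (Fin 3)) (Multiplicative.ofAdd (Pi.single i n)) =
      (SemidirectProduct.inl (Multiplicative.ofAdd (Pi.single i (1 : ℤ)))) ^ n := by
    rw [← map_zpow, ← smul_single i n]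
    rfl
  rw [h]
  exact zpow_mem hi n

lemma inl_mem (v : Fin 3 → ℤ) :
    SemidirectProduct.inl (φ := permHom (Fin 3)) (Multiplicative.ofAdd v) ∈ phi.range := by
  have hv : Multiplicative.ofAdd v = Multiplicative.ofAdd (Pi.single (0 : Fin 3) (v 0)) *
      Multiplicative.ofAdd (Pi.single (1 : Fin 3) (v 1)) *
      Multiplicative.ofAdd (Pi.single (2 : Fin 3) (v 2)) := by
    rw [← ofAdd_add, ← ofAdd_add]
    congr 1
    funext j
    fin_cases j <;> simp [Pi.single_apply]
  rw [hv, map_mul, map_mul]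
  have h0 := single_mem 0 (idX0 ▸ mul_mem (mul_mem hT_mem hA_mem) hT_mem) (v 0)
  have h1 := single_mem 1 (idX1 ▸ mul_mem hA_mem (inv_mem hT_mem)) (v 1)
  have h2 := single_mem 2 (idX2 ▸ mul_mem (inv_mem hT_mem) hA_mem) (v 2)
  exact mul_mem (mul_mem h0 h1) h2

lemma inr_mem (p : Equiv.Perm (Fin 3)) :
    SemidirectProduct.inr (φ := permHom (Fin 3)) p ∈ phi.range := by
  have hR : SemidirectProduct.inr (φ := permHom (Fin 3)) cP ∈ phi.range :=
    idR ▸ mul_mem (mul_mem (inv_mem hA_mem) hT_mem) hA_mem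
  have hS : SemidirectProduct.inr (φ := permHom (Fin 3)) sP ∈ phi.range := idB ▸ hB_mem
  rcases sixPerm p with hp|hp|hp|hp|hp|hp <;> subst hp <;>
    (try simp only [map_mul, map_one]) <;>
    first
      | exact one_mem _
      | exact hR
      | exact mul_mem hR hR
      | exact hS
      | exact mul_mem hR hS
      | exact mul_mem (mul_mem hR hR) hS

lemma phi_surj : Function.Surjective phi := by
  intro y
  have hy : y ∈ phi.range := by
    rw [← SemidirectProduct.inl_left_mul_inr_right y]
    exact mul_mem (inl_mem (Multiplicative.toAdd y.left)) (inr_mem y.right)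
  exact hy

/-! ### Conclusion -/

noncomputable def eIso : PG ≃* G3 := MulEquiv.ofBijective phi ⟨phi_inj, phi_surj⟩

lemma eIso_a : eIso (PresentedGroup.of true) = Ag := phi_a
lemma eIso_b : eIso (PresentedGroup.of false) = Bg := phi_b

end Stmt11Aux

/-- The semidirect product `ℤ³ ⋊ S₃` (with `S₃` permuting coordinates) has the
presentation with two generators `a, b` and relations `b² = e`, `(baba⁻¹)³ = e`,
and `ba³ba⁻³ = e`, where the isomorphism sends `a` to `((0,0,1), c)` with `c`
the `3`-cycle `c(k) = k - 1 mod 3`, and `b` to `(0, (1 2))`. -/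
theorem stmt_11 :
    ∃ e : PresentedGroup sdpRelsThree ≃*
        (Multiplicative (Fin 3 → ℤ) ⋊[permHom (Fin 3)] Equiv.Perm (Fin 3)),
      e (PresentedGroup.of true) =
        ⟨Multiplicative.ofAdd (Pi.single (2 : Fin 3) (1 : ℤ)), (finRotate 3).symm⟩ ∧
      e (PresentedGroup.of false) =
        ⟨1, Equiv.swap (0 : Fin 3) (1 : Fin 3)⟩ := by
  exact ⟨Stmt11Aux.eIso, Stmt11Aux.eIso_a, Stmt11Aux.eIso_b⟩
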